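/- The improper integral ∫_{1}^{∞} ( y²/√(y⁴ − 1) − 1 ) dy converges, and ∫_{1}^{∞} ( y²/√(y⁴ − 1) − 1 ) dy − 1 = − √2·π^{3/2} / Γ(1/4)². -/

import Mathlib

open MeasureTheory Real Set

section aux

lemma one_lt_pow4 {y : ℝ} (hy : 1 < y) : 1 < y ^ 4 := one_lt_pow₀ hy (by norm_num)

lemma sqrt_pos_of_one_lt {y : ℝ} (hy : 1 < y) : 0 < Real.sqrt (y ^ 4 - 1) := by
  have := one_lt_pow4 hy; apply Real.sqrt_pos.2; linarith

lemma sq_sqrt' {y : ℝ} (hy : 1 < y) : Real.sqrt (y ^ 4 - 1) ^ 2 = y ^ 4 - 1 := by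
  have := one_lt_pow4 hy; rw [sq]; exact Real.mul_self_sqrt (by linarith)

lemma f_eq {y : ℝ} (hy : 1 < y) :
    y ^ 2 / Real.sqrt (y ^ 4 - 1) - 1 =
      1 / (Real.sqrt (y ^ 4 - 1) * (y ^ 2 + Real.sqrt (y ^ 4 - 1))) := by
  have hs := sqrt_pos_of_one_lt hy
  have hsq := sq_sqrt' hy
  have hy0 : (0:ℝ) < y := by linarith
  have h2 : (0:ℝ) < y ^ 2 + Real.sqrt (y ^ 4 - 1) := by positivity
  field_simp
  linear_combination (-1) * hsq

lemma f_nonneg {y : ℝ} (hy : 1 < y) : 0 ≤ y ^ 2 / Real.sqrt (y ^ 4 - 1) - 1 := by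
  rw [f_eq hy]
  have hs := sqrt_pos_of_one_lt hy
  positivity

lemma sqrt_le_sq {y : ℝ} (hy : 1 < y) : Real.sqrt (y ^ 4 - 1) ≤ y ^ 2 := by
  have := one_lt_pow4 hy
  rw [show y ^ 2 = Real.sqrt ((y ^ 2) ^ 2) from (Real.sqrt_sq (by positivity)).symm]
  apply Real.sqrt_le_sqrt; nlinarith

lemma hasDerivAt_negh {y : ℝ} (hy : 1 < y) :
    HasDerivAt (fun y : ℝ => -(y - Real.sqrt (y ^ 4 - 1) / y))
      ((y ^ 2 / Real.sqrt (y ^ 4 - 1) - 1) + 1 / (y ^ 2 * Real.sqrt (y ^ 4 - 1))) y := by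
  have hy0 : (0:ℝ) < y := by linarith
  have hs := sqrt_pos_of_one_lt hy
  have hsq := sq_sqrt' hy
  have h1 : HasDerivAt (fun y : ℝ => y ^ 4 - 1) (4 * y ^ 3) y := by
    simpa using ((hasDerivAt_pow 4 y).sub_const 1)
  have h2 : HasDerivAt (fun y : ℝ => Real.sqrt (y ^ 4 - 1))
      (4 * y ^ 3 / (2 * Real.sqrt (y ^ 4 - 1))) y := by
    have := (Real.hasDerivAt_sqrt (by nlinarith [one_lt_pow4 hy])).comp y h1
    rw [show 4 * y ^ 3 / (2 * Real.sqrt (y ^ 4 - 1)) = 1 / (2 * Real.sqrt (y ^ 4 - 1)) * (4 * y ^ 3) by ring]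
    exact this
  have h3 : HasDerivAt (fun y : ℝ => Real.sqrt (y ^ 4 - 1) / y)
      ((4 * y ^ 3 / (2 * Real.sqrt (y ^ 4 - 1)) * y - Real.sqrt (y ^ 4 - 1) * 1) / y ^ 2) y :=
    h2.div (hasDerivAt_id y) hy0.ne'
  have h5 : HasDerivAt (fun y : ℝ => -(y - Real.sqrt (y ^ 4 - 1) / y))
      (-(1 - (4 * y ^ 3 / (2 * Real.sqrt (y ^ 4 - 1)) * y - Real.sqrt (y ^ 4 - 1) * 1) / y ^ 2)) y := by
    exact ((hasDerivAt_id' y).sub h3).neg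
  convert h5 using 1
  field_simp
  linear_combination 2 * hsq

lemma tendsto_negh : Filter.Tendsto (fun y : ℝ => -(y - Real.sqrt (y ^ 4 - 1) / y))
    Filter.atTop (nhds 0) := by
  have key : ∀ y : ℝ, 1 < y →
      y - Real.sqrt (y ^ 4 - 1) / y = 1 / (y * (y ^ 2 + Real.sqrt (y ^ 4 - 1))) := by
    intro y hy
    have hs := sqrt_pos_of_one_lt hy
    have hsq := sq_sqrt' hy
    have hy0 : (0:ℝ) < y := by linarith
    have h2 : (0:ℝ) < y ^ 2 + Real.sqrt (y ^ 4 - 1) := by positivity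
    field_simp
    linear_combination (-1) * hsq
  rw [show (0:ℝ) = -0 by norm_num]
  apply Filter.Tendsto.neg
  apply squeeze_zero' (g := fun y : ℝ => 1 / y)
  · filter_upwards [Filter.eventually_gt_atTop (1:ℝ)] with y hy
    rw [key y hy]; positivity
  · filter_upwards [Filter.eventually_gt_atTop (1:ℝ)] with y hy
    rw [key y hy]
    have hs := sqrt_pos_of_one_lt hy
    have hy0 : (0:ℝ) < y := by linarith
    apply div_le_div_of_nonneg_left (by norm_num) (by positivity)
    nlinarith
  · simpa [one_div] using tendsto_inv_atTop_zero

lemma f_contOn : ContinuousOn (fun y : ℝ => y ^ 2 / Real.sqrt (y ^ 4 - 1) - 1) (Ioi 1) := by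
  apply ContinuousOn.sub _ continuousOn_const
  apply ContinuousOn.div (continuousOn_pow 2)
  · exact (Real.continuous_sqrt.comp (by continuity)).continuousOn
  · exact fun y hy => (sqrt_pos_of_one_lt hy).ne'

lemma f_integrable : IntegrableOn (fun y : ℝ => y ^ 2 / Real.sqrt (y ^ 4 - 1) - 1) (Ioi 1) := by
  have hmeas : AEStronglyMeasurable (fun y : ℝ => y ^ 2 / Real.sqrt (y ^ 4 - 1) - 1)
      (volume.restrict (Ioi (1:ℝ))) :=
    f_contOn.aestronglyMeasurable measurableSet_Ioi
  have hsplit : Ioi (1:ℝ) = Ioc 1 2 ∪ Ioi 2 := by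
    rw [Ioc_union_Ioi_eq_Ioi]; norm_num
  rw [hsplit]
  apply IntegrableOn.union
  · have hint : IntegrableOn (fun y : ℝ => 2 * (y - 1) ^ (-(1/2) : ℝ)) (Ioc 1 2) := by
      have h0 : IntervalIntegrable (fun x : ℝ => x ^ (-(1/2) : ℝ)) volume 0 1 :=
        intervalIntegral.intervalIntegrable_rpow' (by norm_num)
      have h1 := (h0.comp_sub_right 1)
      norm_num at h1
      have := (intervalIntegrable_iff_integrableOn_Ioc_of_le (by norm_num : (1:ℝ) ≤ 2)).1 h1
      exact this.const_mul 2
    apply Integrable.mono' hint (hmeas.mono_set (by rw [hsplit]; exact subset_union_left))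
    filter_upwards [ae_restrict_mem measurableSet_Ioc] with y hy
    obtain ⟨hy1, hy2⟩ := hy
    have hs := sqrt_pos_of_one_lt hy1
    have hsq := sq_sqrt' hy1
    rw [Real.norm_of_nonneg (f_nonneg hy1), f_eq hy1]
    have hb : 2 * Real.sqrt (y - 1) ≤ Real.sqrt (y ^ 4 - 1) := by
      rw [show (2:ℝ) * Real.sqrt (y - 1) = Real.sqrt (4 * (y - 1)) by
        rw [show (4:ℝ) * (y-1) = 2^2 * (y-1) by ring, Real.sqrt_mul (by positivity),
          Real.sqrt_sq (by norm_num)]]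
      apply Real.sqrt_le_sqrt
      nlinarith [mul_nonneg (sq_nonneg (y-1)) (show (0:ℝ) ≤ y^2+2*y+3 by nlinarith [sq_nonneg (y+1)])]
    have hsy : (0:ℝ) < Real.sqrt (y - 1) := Real.sqrt_pos.2 (by linarith)
    have h2 : (1:ℝ) ≤ y ^ 2 + Real.sqrt (y ^ 4 - 1) := by nlinarith
    rw [Real.rpow_neg (by linarith), ← Real.sqrt_eq_rpow]
    rw [div_le_iff₀ (by positivity), mul_assoc]
    calc (1:ℝ) = (2 * Real.sqrt (y-1)) * (Real.sqrt (y-1))⁻¹ * (1/2) := by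
          field_simp
      _ ≤ Real.sqrt (y ^ 4 - 1) * (Real.sqrt (y-1))⁻¹ * (y ^ 2 + Real.sqrt (y ^ 4 - 1)) := by
          apply mul_le_mul _ (by linarith) (by norm_num) (by positivity)
          exact mul_le_mul_of_nonneg_right hb (by positivity)
      _ = 2 * ((Real.sqrt (y-1))⁻¹ * (Real.sqrt (y ^ 4 - 1) * (y ^ 2 + Real.sqrt (y ^ 4 - 1)))) / 2 := by
          ring
      _ ≤ 2 * ((Real.sqrt (y-1))⁻¹ * (Real.sqrt (y ^ 4 - 1) * (y ^ 2 + Real.sqrt (y ^ 4 - 1)))) := by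
          nlinarith [mul_pos hs (by nlinarith : (0:ℝ) < y ^ 2 + Real.sqrt (y ^ 4 - 1)), inv_pos.2 hsy]
  · have hint : IntegrableOn (fun y : ℝ => 2 * y ^ (-4 : ℝ)) (Ioi 2) :=
      (integrableOn_Ioi_rpow_of_lt (by norm_num) (by norm_num)).const_mul 2
    apply Integrable.mono' hint (hmeas.mono_set (by rw [hsplit]; exact subset_union_right))
    filter_upwards [ae_restrict_mem measurableSet_Ioi] with y hy
    have hy2 : (2:ℝ) < y := hy
    have hy1 : (1:ℝ) < y := by linarith
    have hs := sqrt_pos_of_one_lt hy1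
    have hsq := sq_sqrt' hy1
    rw [Real.norm_of_nonneg (f_nonneg hy1), f_eq hy1]
    have hsb : y ^ 2 / 2 ≤ Real.sqrt (y ^ 4 - 1) := by
      rw [show y ^ 2 / 2 = Real.sqrt ((y^2/2)^2) from (Real.sqrt_sq (by positivity)).symm]
      apply Real.sqrt_le_sqrt
      have h16 : (16:ℝ) < y ^ 4 := by
        nlinarith [mul_pos (sub_pos.2 hy2) (show (0:ℝ) < y + 2 by linarith)]
      nlinarith
    rw [Real.rpow_neg (by linarith), show ((4:ℝ):ℝ) = ((4:ℕ):ℝ) by norm_num,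
      Real.rpow_natCast]
    rw [div_le_iff₀ (by positivity)]
    have : y ^ 2 / 2 * (y^2) ≤ Real.sqrt (y ^ 4 - 1) * (y ^ 2 + Real.sqrt (y ^ 4 - 1)) := by
      apply mul_le_mul hsb (by nlinarith) (by positivity) (by positivity)
    calc (1:ℝ) = 2 * (y^2/2*(y^2)) * (y ^ 4 : ℝ)⁻¹ := by field_simp
      _ ≤ 2 * (Real.sqrt (y ^ 4 - 1) * (y ^ 2 + Real.sqrt (y ^ 4 - 1))) * (y^4:ℝ)⁻¹ := by
          apply mul_le_mul_of_nonneg_right _ (by positivity)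
          linarith
      _ = 2 * (y^4:ℝ)⁻¹ * (Real.sqrt (y ^ 4 - 1) * (y ^ 2 + Real.sqrt (y ^ 4 - 1))) := by ring

lemma g_integrable : IntegrableOn (fun y : ℝ => 1 / (y ^ 2 * Real.sqrt (y ^ 4 - 1))) (Ioi 1) := by
  have hmeas : AEStronglyMeasurable (fun y : ℝ => 1 / (y ^ 2 * Real.sqrt (y ^ 4 - 1)))
      (volume.restrict (Ioi (1:ℝ))) := by
    apply ContinuousOn.aestronglyMeasurable _ measurableSet_Ioi
    apply ContinuousOn.div continuousOn_const
    · exact (continuousOn_pow 2).mul (Real.continuous_sqrt.comp (by continuity)).continuousOn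
    · intro y hy
      have hs := sqrt_pos_of_one_lt hy
      have : (1:ℝ) < y := hy
      positivity
  apply Integrable.mono' (f_integrable.const_mul 2) hmeas
  filter_upwards [ae_restrict_mem measurableSet_Ioi] with y hy
  have hy1 : (1:ℝ) < y := hy
  have hs := sqrt_pos_of_one_lt hy1
  have hy0 : (0:ℝ) < y := by linarith
  have hle := sqrt_le_sq hy1
  rw [Real.norm_of_nonneg (by positivity), f_eq hy1, mul_one_div, div_le_div_iff₀ (by positivity) (by positivity)]
  nlinarith [mul_pos (mul_pos hs (by positivity : (0:ℝ) < y^2)) hs]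

lemma ftc_part :
    ∫ y in Ioi (1:ℝ), ((y ^ 2 / Real.sqrt (y ^ 4 - 1) - 1) + 1 / (y ^ 2 * Real.sqrt (y ^ 4 - 1))) = 1 := by
  have hcont : ContinuousWithinAt (fun y : ℝ => -(y - Real.sqrt (y ^ 4 - 1) / y)) (Ici 1) 1 := by
    apply ContinuousAt.continuousWithinAt
    apply ContinuousAt.neg
    apply ContinuousAt.sub continuousAt_id
    apply ContinuousAt.div
    · exact (Real.continuous_sqrt.comp (by continuity)).continuousAt
    · exact continuousAt_id
    · norm_num
  have := integral_Ioi_of_hasDerivAt_of_tendsto hcont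
    (fun y hy => hasDerivAt_negh hy)
    (f_integrable.add g_integrable) tendsto_negh
  rw [this]
  norm_num

lemma beta_eval :
    ∫ x in Ioo (0:ℝ) 1, x ^ (-(1/4) : ℝ) * (1 - x) ^ (-(1/2) : ℝ) =
      Real.Gamma (3/4) * Real.Gamma (1/2) / Real.Gamma (5/4) := by
  have h5 : (0:ℝ) < Real.Gamma (5/4) := Real.Gamma_pos_of_pos (by norm_num)
  have hbeta := Complex.Gamma_mul_Gamma_eq_betaIntegral
    (s := (3/4 : ℂ)) (t := (1/2 : ℂ)) (by norm_num [Complex.ofReal_re]) (by norm_num)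
  have hB : Complex.betaIntegral (3/4) (1/2) =
      ((∫ x in Ioo (0:ℝ) 1, x ^ (-(1/4) : ℝ) * (1 - x) ^ (-(1/2) : ℝ) : ℝ) : ℂ) := by
    rw [Complex.betaIntegral]
    rw [show ∫ x in Ioo (0:ℝ) 1, x ^ (-(1/4) : ℝ) * (1 - x) ^ (-(1/2) : ℝ)
        = ∫ x in (0:ℝ)..1, x ^ (-(1/4) : ℝ) * (1 - x) ^ (-(1/2) : ℝ) by
      rw [intervalIntegral.integral_of_le (by norm_num), integral_Ioc_eq_integral_Ioo]]
    rw [← intervalIntegral.integral_ofReal]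
    apply intervalIntegral.integral_congr
    intro x hx
    rw [uIcc_of_le (by norm_num)] at hx
    obtain ⟨hx0, hx1⟩ := hx
    push_cast
    rw [Complex.ofReal_cpow hx0, Complex.ofReal_cpow (by linarith)]
    norm_num
  rw [hB] at hbeta
  have h34 : Complex.Gamma (3/4) = ((Real.Gamma (3/4) : ℝ) : ℂ) := by
    rw [show ((3/4 : ℂ)) = ((3/4 : ℝ) : ℂ) by norm_num, Complex.Gamma_ofReal]
  have h12 : Complex.Gamma (1/2) = ((Real.Gamma (1/2) : ℝ) : ℂ) := by
    rw [show ((1/2 : ℂ)) = ((1/2 : ℝ) : ℂ) by norm_num, Complex.Gamma_ofReal]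
  have h54 : Complex.Gamma (3/4 + 1/2) = ((Real.Gamma (5/4) : ℝ) : ℂ) := by
    rw [show ((3/4 + 1/2 : ℂ)) = ((5/4 : ℝ) : ℂ) by norm_num, Complex.Gamma_ofReal]
  rw [h34, h12, h54] at hbeta
  have : Real.Gamma (3/4) * Real.Gamma (1/2)
      = Real.Gamma (5/4) * ∫ x in Ioo (0:ℝ) 1, x ^ (-(1/4) : ℝ) * (1 - x) ^ (-(1/2) : ℝ) := by
    exact_mod_cast hbeta
  rw [this]
  field_simp

lemma subst_eq :
    ∫ x in Ioo (0:ℝ) 1, x ^ (-(1/4) : ℝ) * (1 - x) ^ (-(1/2) : ℝ) =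
      ∫ y in Ioi (1:ℝ), 4 * (1 / (y ^ 2 * Real.sqrt (y ^ 4 - 1))) := by
  have himage : (fun y : ℝ => (y ^ 4)⁻¹) '' Ioi 1 = Ioo 0 1 := by
    ext x
    constructor
    · rintro ⟨y, hy, rfl⟩
      have hy4 := one_lt_pow4 hy
      constructor
      · positivity
      · rw [inv_lt_one_iff₀]; right; exact hy4
    · rintro ⟨hx0, hx1⟩
      refine ⟨x ^ (-(1/4) : ℝ), ?_, ?_⟩
      · exact (Real.one_lt_rpow_iff_of_pos hx0).2 (Or.inr ⟨hx1, by norm_num⟩)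
      · show ((x ^ (-(1/4):ℝ)) ^ 4)⁻¹ = x
        rw [← Real.rpow_natCast (x ^ (-(1/4):ℝ)) 4, ← Real.rpow_mul hx0.le]
        norm_num
        rw [Real.rpow_neg_one]
        exact inv_inv x
  have hderiv : ∀ y ∈ Ioi (1:ℝ), HasDerivWithinAt (fun y : ℝ => (y ^ 4)⁻¹)
      (-(4 * y ^ 3) / (y ^ 4) ^ 2) (Ioi 1) y := by
    intro y hy
    have hy0 : (0:ℝ) < y := lt_trans one_pos hy
    have := ((hasDerivAt_pow 4 y).inv (by positivity)).hasDerivWithinAt (s := Ioi 1)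
    simp at this; exact this
  have hinj : InjOn (fun y : ℝ => (y ^ 4)⁻¹) (Ioi 1) := by
    intro a ha b hb h
    have ha0 : (0:ℝ) ≤ a := by have : (1:ℝ) < a := ha; linarith
    have hb0 : (0:ℝ) ≤ b := by have : (1:ℝ) < b := hb; linarith
    have h4 : a ^ 4 = b ^ 4 := inv_injective h
    exact (pow_left_strictMonoOn₀ (by norm_num : (4:ℕ) ≠ 0)).injOn ha0 hb0 h4
  rw [← himage,
    integral_image_eq_integral_abs_deriv_smul measurableSet_Ioi hderiv hinj]
  apply setIntegral_congr_fun measurableSet_Ioi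
  intro y hy
  have hy1 : (1:ℝ) < y := hy
  have hy0 : (0:ℝ) < y := lt_trans one_pos hy1
  have hy4 := one_lt_pow4 hy1
  have hs := sqrt_pos_of_one_lt hy1
  simp only [smul_eq_mul]
  have e1 : |(-(4 * y ^ 3) / (y ^ 4) ^ 2)| = 4 / y ^ 5 := by
    rw [abs_div, abs_neg, abs_of_nonneg (by positivity : (0:ℝ) ≤ 4 * y ^ 3),
      abs_of_nonneg (by positivity : (0:ℝ) ≤ (y ^ 4) ^ 2)]
    rw [div_eq_div_iff (by positivity) (by positivity)]
    ring
  have e2 : ((y ^ 4)⁻¹) ^ (-(1/4) : ℝ) = y := by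
    rw [Real.inv_rpow (by positivity), ← Real.rpow_neg (by positivity), neg_neg]
    rw [← Real.rpow_natCast y 4, ← Real.rpow_mul hy0.le]
    norm_num
  have e3 : (1 - ((y ^ 4)⁻¹)) ^ (-(1/2) : ℝ) = y ^ 2 / Real.sqrt (y ^ 4 - 1) := by
    have h01 : (0:ℝ) ≤ 1 - (y ^ 4)⁻¹ := by
      have : (y ^ 4)⁻¹ < 1 := by rw [inv_lt_one_iff₀]; right; exact hy4
      linarith
    rw [Real.rpow_neg h01, ← Real.sqrt_eq_rpow]
    rw [show (1 - (y ^ 4)⁻¹ : ℝ) = (y ^ 4 - 1) / (y ^ 2) ^ 2 by field_simp]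
    rw [Real.sqrt_div (by linarith), Real.sqrt_sq (by positivity)]
    rw [inv_div]
  rw [e1, e2, e3]
  field_simp

lemma final_arith :
    (Real.Gamma (3/4) * Real.Gamma (1/2) / Real.Gamma (5/4)) / 4 =
      Real.sqrt 2 * Real.pi ^ ((3 : ℝ) / 2) / (Real.Gamma (1 / 4)) ^ 2 := by
  have h14 : (0:ℝ) < Real.Gamma (1/4) := Real.Gamma_pos_of_pos (by norm_num)
  have h54 : Real.Gamma (5/4) = (1/4) * Real.Gamma (1/4) := by
    rw [show (5/4 : ℝ) = 1/4 + 1 by norm_num, Real.Gamma_add_one (by norm_num)]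
  have hrefl : Real.Gamma (1/4) * Real.Gamma (3/4) = Real.sqrt 2 * Real.pi := by
    have h := Real.Gamma_mul_Gamma_one_sub (1/4)
    rw [show (1 - 1/4 : ℝ) = 3/4 by norm_num, show Real.pi * (1/4) = Real.pi/4 by ring,
      Real.sin_pi_div_four] at h
    have hs2 : Real.sqrt 2 * Real.sqrt 2 = 2 := Real.mul_self_sqrt (by norm_num)
    have hs2pos : (0:ℝ) < Real.sqrt 2 := Real.sqrt_pos.2 (by norm_num)
    have hs2sq : Real.sqrt 2 ^ 2 = 2 := Real.sq_sqrt (by norm_num)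
    rw [eq_div_iff (by positivity)] at h
    rw [← h]
    field_simp
    linear_combination (-1) * hs2sq
  have hg12 : Real.Gamma (1/2) = Real.sqrt Real.pi := Real.Gamma_one_half_eq
  have hpow : Real.pi ^ ((3:ℝ)/2) = Real.pi * Real.sqrt Real.pi := by
    rw [show (3:ℝ)/2 = 1 + 1/2 by norm_num, Real.rpow_add Real.pi_pos, Real.rpow_one,
      ← Real.sqrt_eq_rpow]
  have hG34 : Real.Gamma (3/4) = Real.sqrt 2 * Real.pi / Real.Gamma (1/4) := by
    rw [eq_div_iff h14.ne']
    linear_combination hrefl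
  rw [h54, hg12, hpow, hG34]
  field_simp

end aux

/-- The improper integral `∫_{1}^{∞} ( y²/√(y⁴ − 1) − 1 ) dy` converges, and this integral
minus `1` equals `− √2·π^{3/2} / Γ(1/4)²`. -/
theorem adS5_wilson_loop_energy_integral :
    IntegrableOn (fun y : ℝ => y ^ 2 / Real.sqrt (y ^ 4 - 1) - 1) (Ioi 1) ∧
    (∫ y in Ioi (1 : ℝ), (y ^ 2 / Real.sqrt (y ^ 4 - 1) - 1)) - 1 =
      -(Real.sqrt 2 * Real.pi ^ ((3 : ℝ) / 2) / (Real.Gamma (1 / 4)) ^ 2) := by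
  refine ⟨f_integrable, ?_⟩
  have hadd : (∫ y in Ioi (1:ℝ), ((y ^ 2 / Real.sqrt (y ^ 4 - 1) - 1)
        + 1 / (y ^ 2 * Real.sqrt (y ^ 4 - 1))))
      = (∫ y in Ioi (1:ℝ), (y ^ 2 / Real.sqrt (y ^ 4 - 1) - 1))
        + ∫ y in Ioi (1:ℝ), 1 / (y ^ 2 * Real.sqrt (y ^ 4 - 1)) :=
    integral_add f_integrable g_integrable
  have hg : ∫ y in Ioi (1:ℝ), 1 / (y ^ 2 * Real.sqrt (y ^ 4 - 1))
      = (Real.Gamma (3/4) * Real.Gamma (1/2) / Real.Gamma (5/4)) / 4 := by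
    have h4 : ∫ y in Ioi (1:ℝ), 4 * (1 / (y ^ 2 * Real.sqrt (y ^ 4 - 1)))
        = 4 * ∫ y in Ioi (1:ℝ), 1 / (y ^ 2 * Real.sqrt (y ^ 4 - 1)) :=
      MeasureTheory.integral_const_mul 4 _
    have := subst_eq
    rw [beta_eval] at this
    rw [h4] at this
    linarith
  have h1 := ftc_part
  rw [hadd, hg] at h1
  rw [final_arith] at hg
  linarith [hg, h1, final_arith]
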